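/- Let A be an n×n nonsingular M-matrix and let α, β > 0. If Z_{α,B̄} and Z_{β,B̄} are independent, then Z_{α,β̄} + Z_{β,B̄} has the same distribution as Z_{α+β,B̄}; equivalently, for every k ∈ ℕ^n, P(Z_{α+β,B̄} = k) = Σ_{k'+k''=k} P(Z_{α,B̄} = k') P(Z_{β,B̄} = k''), where the sum is over all pairs k', k'' ∈ ℕ^n with k' + k'' = k componentwise. -/

import Mathlib

open MeasureTheory ProbabilityTheory Matrix

noncomputable section

/-- Number of cycles of a permutation, counting fixed points as cycles. -/
def numCycles {β : Type*} [Fintype β] [DecidableEq β] (π : Equiv.Perm β) : ℕ :=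
  π.cycleType.card + (Finset.univ.filter fun i => π i = i).card

/-- The `α`-permanent `|M|_α = Σ_π α^{c(π)} Π_i M_{i,π(i)}`. -/
def aperm {β : Type*} [Fintype β] [DecidableEq β] (α : ℝ) (M : Matrix β β ℝ) : ℝ :=
  ∑ π : Equiv.Perm β, α ^ numCycles π * ∏ i, M i (π i)

/-- The `α`-permanent `|C(k)|_α` of the `|k| × |k|` matrix `C(k)` whose entry at `(p,q)`
is `C i_p i_q`, where row/column indices are grouped into blocks of sizes `k 1, …, k n`.
We index the rows and columns by the type `Σ i, Fin (k i)`; since the `α`-permanent is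
invariant under simultaneous relabeling of rows and columns, this is the same number. -/
def apermK {n : ℕ} (α : ℝ) (C : Matrix (Fin n) (Fin n) ℝ) (k : Fin n → ℕ) : ℝ :=
  aperm α (Matrix.of fun p q : Σ i : Fin n, Fin (k i) => C p.1 q.1)

/-- A nonsingular M-matrix: nonpositive off-diagonal entries, invertible,
with entrywise nonnegative inverse. -/
def IsNonsingMMatrix {n : ℕ} (A : Matrix (Fin n) (Fin n) ℝ) : Prop :=
  (∀ i j, i ≠ j → A i j ≤ 0) ∧ IsUnit A.det ∧ ∀ i j, 0 ≤ A⁻¹ i j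

/-- `Ā = D_A⁻¹ A`. -/
def Abar {n : ℕ} (A : Matrix (Fin n) (Fin n) ℝ) : Matrix (Fin n) (Fin n) ℝ :=
  Matrix.of fun i j => A i j / A i i

/-- `B̄ = D_A⁻¹ B`, where `A = D_A - B` with `B ≥ 0` having zero diagonal. -/
def Bbar {n : ℕ} (A : Matrix (Fin n) (Fin n) ℝ) : Matrix (Fin n) (Fin n) ℝ :=
  Matrix.of fun i j => if i = j then 0 else -(A i j) / A i i

/-- The probability mass function of `Z_{α,B̄}`:
`P(Z = k) = det(Ā)^α |B̄(k)|_α / Π_i k_i!`. -/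
def Zpmf {n : ℕ} (α : ℝ) (A : Matrix (Fin n) (Fin n) ℝ) (k : Fin n → ℕ) : ℝ :=
  (Abar A).det ^ α * apermK α (Bbar A) k / ∏ i, (Nat.factorial (k i) : ℝ)

/-- `X` is an `α`-permanental random vector with kernel `R`:
`E(e^{-Σ s_i X_i}) = det(I + R S)^{-α}` for all `s ≥ 0`, `S = diag(s)`. -/
def IsPermanental {n : ℕ} {Ω : Type*} [MeasurableSpace Ω] (μ : Measure Ω)
    (α : ℝ) (R : Matrix (Fin n) (Fin n) ℝ) (X : Ω → Fin n → ℝ) : Prop :=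
  Measurable X ∧ (∀ ω i, 0 ≤ X ω i) ∧
    ∀ s : Fin n → ℝ, (∀ i, 0 ≤ s i) →
      ∫ ω, Real.exp (-∑ i, s i * X ω i) ∂μ = ((1 + R * Matrix.diagonal s).det) ^ (-α)

end


open Equiv Equiv.Perm Finset

noncomputable section

namespace AP

variable {γ : Type*} [Fintype γ] [DecidableEq γ] {δ : Type*} [Fintype δ] [DecidableEq δ]

instance qDecEq (π : Equiv.Perm γ) : DecidableEq (Quotient (Equiv.Perm.SameCycle.setoid π)) :=
  fun a b => Quotient.recOnSubsingleton₂ a b fun x y =>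
    decidable_of_iff (π.SameCycle x y) ⟨fun h => Quotient.sound h, fun h => Quotient.exact h⟩

abbrev Q (π : Equiv.Perm γ) : Type _ := Quotient (Equiv.Perm.SameCycle.setoid π)

instance qFintype (π : Equiv.Perm γ) : Fintype (Q π) :=
  @Quotient.fintype γ _ (Equiv.Perm.SameCycle.setoid π)
    (fun x y => decidable_of_iff (π.SameCycle x y) Iff.rfl)

omit [Fintype γ] [DecidableEq γ] in
lemma q_exact {π : Equiv.Perm γ} {x y : γ}
    (h : (Quotient.mk (Equiv.Perm.SameCycle.setoid π) x)
       = (Quotient.mk (Equiv.Perm.SameCycle.setoid π) y)) : π.SameCycle x y :=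
  Quotient.exact h

omit [Fintype γ] [DecidableEq γ] in
lemma q_sound {π : Equiv.Perm γ} {x y : γ} (h : π.SameCycle x y) :
    (Quotient.mk (Equiv.Perm.SameCycle.setoid π) x)
       = (Quotient.mk (Equiv.Perm.SameCycle.setoid π) y) :=
  Quotient.sound h

omit [Fintype γ] [DecidableEq γ] in
lemma sameCycle_fixed {π : Equiv.Perm γ} {x y : γ} (hx : π x = x)
    (h : π.SameCycle x y) : y = x := by
  obtain ⟨i, hi⟩ := h
  rw [Equiv.Perm.zpow_apply_eq_self_of_apply_eq_self hx i] at hi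
  exact hi.symm

private def gfun (π : Equiv.Perm γ) (x : γ) : ↥π.cycleFactorsFinset ⊕ {z : γ // π z = z} :=
  if h : π x = x then Sum.inr ⟨x, h⟩ else
    Sum.inl ⟨π.cycleOf x, by
      rw [Equiv.Perm.cycleOf_mem_cycleFactorsFinset_iff, Equiv.Perm.mem_support]; exact h⟩

private lemma gfun_respects (π : Equiv.Perm γ) : ∀ x y : γ, π.SameCycle x y →
    gfun π x = gfun π y := by
  intro x y hxy
  by_cases hx : π x = x
  · have : y = x := sameCycle_fixed hx hxy
    subst this; rfl
  · have hy : π y ≠ y := fun hy => hx (by rw [sameCycle_fixed hy hxy.symm]; exact hy)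
    rw [gfun, gfun, dif_neg hx, dif_neg hy]
    exact congrArg Sum.inl (Subtype.ext hxy.cycleOf_eq)

/-- The number of cycles of `π` equals the number of `SameCycle`-classes. -/
lemma numCycles_eq_card_Q (π : Equiv.Perm γ) :
    numCycles π = Fintype.card (Q π) := by
  classical
  let f : Q π → ↥π.cycleFactorsFinset ⊕ {z : γ // π z = z} :=
    Quotient.lift (gfun π) (gfun_respects π)
  have hbij : Function.Bijective f := by
    constructor
    · rintro ⟨x⟩ ⟨y⟩ hfxy
      have hfxy' : gfun π x = gfun π y := hfxy
      by_cases hx : π x = x <;> by_cases hy : π y = y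
      · rw [gfun, gfun, dif_pos hx, dif_pos hy] at hfxy'
        simp only [Sum.inr.injEq, Subtype.mk.injEq] at hfxy'
        subst hfxy'
        rfl
      · rw [gfun, gfun, dif_pos hx, dif_neg hy] at hfxy'
        simp at hfxy'
      · rw [gfun, gfun, dif_neg hx, dif_pos hy] at hfxy'
        simp at hfxy'
      · rw [gfun, gfun, dif_neg hx, dif_neg hy] at hfxy'
        simp only [Sum.inl.injEq, Subtype.mk.injEq] at hfxy'
        apply q_sound
        have : y ∈ (π.cycleOf x).support := by
          rw [hfxy']
          exact (Equiv.Perm.mem_support_cycleOf_iff' hy).mpr (Equiv.Perm.SameCycle.refl π y)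
        exact (Equiv.Perm.mem_support_cycleOf_iff' hx).mp this
    · rintro (⟨c, hc⟩ | ⟨x, hx⟩)
      · have hcyc : c.IsCycle := (Equiv.Perm.mem_cycleFactorsFinset_iff.mp hc).1
        obtain ⟨a, ha⟩ := hcyc.nonempty_support
        have hmoved : π a ≠ a := by
          have h2 := (Equiv.Perm.mem_cycleFactorsFinset_iff.mp hc).2 a ha
          rw [← h2]
          exact Equiv.Perm.mem_support.mp ha
        refine ⟨Quotient.mk _ a, ?_⟩
        show gfun π a = _
        rw [gfun, dif_neg hmoved]
        exact congrArg Sum.inl (Subtype.ext (Equiv.Perm.cycle_is_cycleOf ha hc).symm)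
      · exact ⟨Quotient.mk _ x, by show gfun π x = _; rw [gfun, dif_pos hx]⟩
  have hcard := Fintype.card_congr (Equiv.ofBijective f hbij)
  rw [hcard, Fintype.card_sum, Fintype.card_coe, Fintype.card_subtype]
  rw [numCycles, Equiv.Perm.cycleType_def, Multiset.card_map]
  rfl

end AP

section ChunkB


namespace AP

variable {γ : Type*} [Fintype γ] [DecidableEq γ] {δ : Type*} [Fintype δ] [DecidableEq δ]

omit [Fintype γ] [DecidableEq γ] in
lemma invariant_zpow {π : Equiv.Perm γ} {T : Finset γ} (h : ∀ x, x ∈ T ↔ π x ∈ T) :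
    ∀ (i : ℤ) (x : γ), x ∈ T ↔ (π ^ i) x ∈ T := by
  have hnat : ∀ (m : ℕ) (x : γ), x ∈ T ↔ (π ^ m) x ∈ T := by
    intro m
    induction m with
    | zero => intro x; simp
    | succ m ih =>
      intro x
      rw [pow_succ', Equiv.Perm.mul_apply]
      exact (ih x).trans (h _)
  intro i x
  cases i with
  | ofNat m => exact hnat m x
  | negSucc m =>
    have h1 := hnat (m + 1) ((π ^ Int.negSucc m) x)
    rw [zpow_negSucc] at *
    rw [h1]
    congr! 1
    exact (show (π ^ (m+1)) ((π ^ (m+1))⁻¹ x) = x from Equiv.apply_symm_apply _ x).symm ▸ rfl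

omit [Fintype γ] [DecidableEq γ] in
lemma invariant_closure {π : Equiv.Perm γ} {T : Finset γ} (h : ∀ x, x ∈ T ↔ π x ∈ T)
    {x y : γ} (hxy : π.SameCycle x y) : x ∈ T ↔ y ∈ T := by
  obtain ⟨i, rfl⟩ := hxy
  exact invariant_zpow h i x

omit [Fintype γ] [DecidableEq γ] in
lemma sameCycle_subtypePerm {π : Equiv.Perm γ} {p : γ → Prop} [DecidablePred p]
    (h : ∀ x, p x ↔ p (π x)) (s t : {x // p x}) :
    (π.subtypePerm fun x => (h x).symm).SameCycle s t ↔ π.SameCycle s.val t.val := by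
  constructor
  · rintro ⟨i, hi⟩
    refine ⟨i, ?_⟩
    rw [Equiv.Perm.subtypePerm_zpow] at hi
    rw [← hi]
    rfl
  · rintro ⟨i, hi⟩
    refine ⟨i, ?_⟩
    rw [Equiv.Perm.subtypePerm_zpow]
    exact Subtype.ext hi

/-- numCycles of the restriction of `π` to an invariant set, as the number of classes met. -/
lemma numCycles_subtypePerm {π : Equiv.Perm γ} {p : γ → Prop} [DecidablePred p]
    (h : ∀ x, p x ↔ p (π x)) :
    numCycles (π.subtypePerm fun x => (h x).symm) =
      ((Finset.univ.filter p).image (Quotient.mk (Equiv.Perm.SameCycle.setoid π))).card := by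
  rw [numCycles_eq_card_Q]
  rw [← Fintype.card_coe]
  apply Fintype.card_congr
  have resp : ∀ s t : {x // p x}, (π.subtypePerm fun x => (h x).symm).SameCycle s t →
      ((⟨Quotient.mk _ s.val, Finset.mem_image_of_mem _ (by simp [s.2])⟩ :
        ↥((Finset.univ.filter p).image (Quotient.mk (Equiv.Perm.SameCycle.setoid π)))) =
       ⟨Quotient.mk _ t.val, Finset.mem_image_of_mem _ (by simp [t.2])⟩) := by
    intro s t hst
    exact Subtype.ext (q_sound ((sameCycle_subtypePerm h s t).mp hst))
  refine Equiv.ofBijective (Quotient.lift _ resp) ⟨?_, ?_⟩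
  · rintro ⟨s⟩ ⟨t⟩ hst
    have hst' : Quotient.mk (Equiv.Perm.SameCycle.setoid π) s.val = Quotient.mk _ t.val :=
      congrArg Subtype.val hst
    exact q_sound ((sameCycle_subtypePerm h s t).mpr (q_exact hst'))
  · rintro ⟨q, hq⟩
    rw [Finset.mem_image] at hq
    obtain ⟨x, hx, hxq⟩ := hq
    rw [Finset.mem_filter] at hx
    exact ⟨Quotient.mk _ ⟨x, hx.2⟩, Subtype.ext hxq⟩

lemma image_compl_eq {π : Equiv.Perm γ} {T : Finset γ} (h : ∀ x, x ∈ T ↔ π x ∈ T) :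
    ((Finset.univ.filter (fun x => x ∉ T)).image
        (Quotient.mk (Equiv.Perm.SameCycle.setoid π))) =
      Finset.univ \ (T.image (Quotient.mk (Equiv.Perm.SameCycle.setoid π))) := by
  ext q
  induction q using Quotient.inductionOn with
  | h x =>
    simp only [Finset.mem_image, Finset.mem_filter, Finset.mem_sdiff, Finset.mem_univ, true_and]
    constructor
    · rintro ⟨y, hy, hyx⟩
      rintro ⟨z, hz, hzx⟩
      have h1 : π.SameCycle z y := q_exact (hzx.trans hyx.symm)
      exact hy ((invariant_closure h h1).mp hz)
    · intro hx
      exact ⟨x, fun hxT => hx ⟨x, hxT, rfl⟩, rfl⟩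

lemma filter_mem_image_eq {π : Equiv.Perm γ} (T : Finset γ) :
    ((Finset.univ.filter (fun x => x ∈ T)).image
        (Quotient.mk (Equiv.Perm.SameCycle.setoid π))) =
      T.image (Quotient.mk (Equiv.Perm.SameCycle.setoid π)) := by
  congr 1
  ext x
  simp

/-- The invariant-set ↔ class-set bijection. -/
def invEquiv (π : Equiv.Perm γ) :
    {T : Finset γ // ∀ x, x ∈ T ↔ π x ∈ T} ≃
      Finset (Quotient (Equiv.Perm.SameCycle.setoid π)) where
  toFun T := T.val.image (Quotient.mk _)
  invFun S := ⟨Finset.univ.filter (fun x => Quotient.mk _ x ∈ S), by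
    intro x
    simp only [Finset.mem_filter, Finset.mem_univ, true_and]
    have : Quotient.mk (Equiv.Perm.SameCycle.setoid π) (π x) = Quotient.mk _ x :=
      q_sound ⟨-1, by simp⟩
    rw [this]⟩
  left_inv T := by
    apply Subtype.ext
    ext x
    simp only [Finset.mem_filter, Finset.mem_univ, true_and, Finset.mem_image]
    constructor
    · rintro ⟨y, hy, hyx⟩
      exact (invariant_closure T.2 (q_exact hyx)).mp hy
    · intro hx
      exact ⟨x, hx, rfl⟩
  right_inv S := by
    ext q
    induction q using Quotient.inductionOn with
    | h x =>
      simp only [Finset.mem_image, Finset.mem_filter, Finset.mem_univ, true_and]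
      constructor
      · rintro ⟨y, hy, hyx⟩
        rwa [← hyx]
      · intro hq
        exact ⟨x, hq, rfl⟩

omit [Fintype γ] [DecidableEq γ] in
lemma numCycles_congr {i1 i2 : Fintype γ} {d1 d2 : DecidableEq γ} (π : Equiv.Perm γ) :
    @numCycles γ i1 d1 π = @numCycles γ i2 d2 π := by
  congr! <;> exact Subsingleton.elim _ _

/-- The key binomial identity over invariant sets. -/
lemma key2 (π : Equiv.Perm γ) (a b : ℝ) :
    ∑ T : {T : Finset γ // ∀ x, x ∈ T ↔ π x ∈ T},
      a ^ numCycles (π.subtypePerm fun x => (T.2 x).symm) *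
        b ^ numCycles (π.subtypePerm (p := fun x => x ∉ T.1) fun x => (not_congr (T.2 x)).symm) =
      (a + b) ^ numCycles π := by
  classical
  have hterm : ∀ T : {T : Finset γ // ∀ x, x ∈ T ↔ π x ∈ T},
      a ^ numCycles (π.subtypePerm fun x => (T.2 x).symm) *
        b ^ numCycles (π.subtypePerm (p := fun x => x ∉ T.1) fun x => (not_congr (T.2 x)).symm) =
      a ^ ((invEquiv π) T).card * b ^ ((Finset.univ \ (invEquiv π) T).card) := by
    intro T
    congr 2
    · have h1 := numCycles_subtypePerm (π := π) (p := fun x => x ∈ T.val) T.2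
      rw [filter_mem_image_eq] at h1
      exact (numCycles_congr _).trans h1
    · have h1 := numCycles_subtypePerm (π := π) (p := fun x => x ∉ T.val)
        (fun x => not_congr (T.2 x))
      rw [image_compl_eq T.2] at h1
      exact (numCycles_congr _).trans h1
  rw [Finset.sum_congr rfl (fun T _ => hterm T)]
  rw [Fintype.sum_equiv (invEquiv π)
    (fun T => a ^ ((invEquiv π) T).card * b ^ ((Finset.univ \ (invEquiv π) T).card))
    (fun S => a ^ S.card * b ^ ((Finset.univ \ S).card)) (fun T => rfl)]
  have hpr := Finset.prod_add (fun _ => a) (fun _ => b)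
    (Finset.univ : Finset (Quotient (Equiv.Perm.SameCycle.setoid π)))
  simp only [Finset.prod_const] at hpr
  rw [← Finset.powerset_univ, ← hpr, Finset.card_univ, numCycles_eq_card_Q]

end AP
end ChunkB

section ChunkC

namespace AP

variable {γ : Type*} [Fintype γ] [DecidableEq γ] {δ : Type*} [Fintype δ] [DecidableEq δ]

lemma univ_inst {β : Type*} (i1 i2 : Fintype β) : @Finset.univ β i1 = @Finset.univ β i2 := by
  cases Subsingleton.elim i1 i2; rfl

omit [Fintype γ] [DecidableEq γ] in
lemma sigma_subtype_ext {A : Type*} {P : A → Finset γ → Prop}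
    {x y : Σ a : A, {T : Finset γ // P a T}} (h1 : x.1 = y.1) (h2 : x.2.val = y.2.val) :
    x = y := by
  obtain ⟨a, T, hT⟩ := x
  obtain ⟨b, S, hS⟩ := y
  dsimp at h1 h2
  subst h1
  subst h2
  rfl

lemma subtypePerm_subtypeCongr_left {T : Finset γ} (π₁ : Equiv.Perm {x // x ∈ T})
    (π₂ : Equiv.Perm {x // x ∉ T}) (h : ∀ x, x ∈ T ↔ (Equiv.Perm.subtypeCongr π₁ π₂) x ∈ T) :
    (Equiv.Perm.subtypeCongr π₁ π₂).subtypePerm (fun x => (h x).symm) = π₁ := by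
  ext s
  show (Equiv.Perm.subtypeCongr π₁ π₂) s.val = (π₁ s).val
  rw [Equiv.Perm.subtypeCongr.left_apply π₁ π₂ s.2]

lemma subtypePerm_subtypeCongr_right {T : Finset γ} (π₁ : Equiv.Perm {x // x ∈ T})
    (π₂ : Equiv.Perm {x // x ∉ T})
    (h : ∀ x, x ∉ T ↔ (Equiv.Perm.subtypeCongr π₁ π₂) x ∉ T) :
    (Equiv.Perm.subtypeCongr π₁ π₂).subtypePerm (fun x => (h x).symm) = π₂ := by
  ext s
  show (Equiv.Perm.subtypeCongr π₁ π₂) s.val = (π₂ s).val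
  rw [Equiv.Perm.subtypeCongr.right_apply π₁ π₂ s.2]

lemma subtypeCongr_invariant {T : Finset γ} (π₁ : Equiv.Perm {x // x ∈ T})
    (π₂ : Equiv.Perm {x // x ∉ T}) :
    ∀ x, x ∈ T ↔ (Equiv.Perm.subtypeCongr π₁ π₂) x ∈ T := by
  intro x
  by_cases hx : x ∈ T
  · rw [Equiv.Perm.subtypeCongr.left_apply π₁ π₂ hx]
    exact iff_of_true hx (π₁ ⟨x, hx⟩).2
  · rw [Equiv.Perm.subtypeCongr.right_apply π₁ π₂ hx]
    exact iff_of_false hx (π₂ ⟨x, hx⟩).2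

/-- The main reindexing bijection. -/
def bigEquiv (γ : Type*) [Fintype γ] [DecidableEq γ] :
    (Σ T : Finset γ, Equiv.Perm {x // x ∈ T} × Equiv.Perm {x // x ∉ T}) ≃
      (Σ π : Equiv.Perm γ, {T : Finset γ // ∀ x, x ∈ T ↔ π x ∈ T}) where
  toFun s := ⟨Equiv.Perm.subtypeCongr s.2.1 s.2.2, s.1, subtypeCongr_invariant s.2.1 s.2.2⟩
  invFun s := ⟨s.2.1, s.1.subtypePerm (fun x => (s.2.2 x).symm), s.1.subtypePerm fun x => (not_congr (s.2.2 x)).symm⟩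
  left_inv s := by
    obtain ⟨T, π₁, π₂⟩ := s
    refine congrArg (Sigma.mk T) (Prod.ext ?_ ?_)
    · exact subtypePerm_subtypeCongr_left π₁ π₂ (subtypeCongr_invariant π₁ π₂)
    · exact subtypePerm_subtypeCongr_right π₁ π₂
        (fun x => not_congr (subtypeCongr_invariant π₁ π₂ x))
  right_inv s := by
    obtain ⟨π, T, h⟩ := s
    refine sigma_subtype_ext ?_ rfl
    show Equiv.Perm.subtypeCongr (π.subtypePerm fun x => (h x).symm) (π.subtypePerm fun x => (not_congr (h x)).symm) = π
    ext x
    by_cases hx : x ∈ T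
    · rw [Equiv.Perm.subtypeCongr.left_apply _ _ hx]
      rfl
    · rw [Equiv.Perm.subtypeCongr.right_apply _ _ hx]
      rfl

/-- Splitting formula for the `(a+b)`-permanent. -/
lemma aperm_add (a b : ℝ) (M : Matrix γ γ ℝ) :
    aperm (a + b) M = ∑ T : Finset γ,
      aperm a (Matrix.of fun p q : {x // x ∈ T} => M p.val q.val) *
      aperm b (Matrix.of fun p q : {x // x ∉ T} => M p.val q.val) := by
  classical
  set F : (Σ T : Finset γ, Equiv.Perm {x // x ∈ T} × Equiv.Perm {x // x ∉ T}) → ℝ :=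
    fun x => (a ^ numCycles x.2.1 * ∏ i, M i.val (x.2.1 i).val) *
      (b ^ numCycles x.2.2 * ∏ i, M i.val (x.2.2 i).val) with hFdef
  set G : (Σ π : Equiv.Perm γ, {T : Finset γ // ∀ x, x ∈ T ↔ π x ∈ T}) → ℝ :=
    fun y => (a ^ numCycles (y.1.subtypePerm fun x => (y.2.2 x).symm) *
      b ^ numCycles (y.1.subtypePerm (p := fun x => x ∉ y.2.1) fun x => (not_congr (y.2.2 x)).symm)) * ∏ i, M i (y.1 i)
    with hGdef
  have hpt : ∀ x, F x = G (bigEquiv γ x) := by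
    rintro ⟨T, π₁, π₂⟩
    have hbe : bigEquiv γ ⟨T, π₁, π₂⟩ =
        ⟨Equiv.Perm.subtypeCongr π₁ π₂, ⟨T, (bigEquiv γ ⟨T, π₁, π₂⟩).2.2⟩⟩ := rfl
    rw [hbe, hGdef, hFdef]
    dsimp only
    rw [subtypePerm_subtypeCongr_left π₁ π₂ ((bigEquiv γ ⟨T, π₁, π₂⟩).2.2),
      subtypePerm_subtypeCongr_right π₁ π₂ (fun x => not_congr ((bigEquiv γ ⟨T, π₁, π₂⟩).2.2 x))]
    have hprod : (∏ i : {x // x ∈ T}, M i.val ((Equiv.Perm.subtypeCongr π₁ π₂) i.val)) *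
        (∏ i : {x // x ∉ T}, M i.val ((Equiv.Perm.subtypeCongr π₁ π₂) i.val)) =
        ∏ i, M i ((Equiv.Perm.subtypeCongr π₁ π₂) i) := by
      have hm := Fintype.prod_subtype_mul_prod_subtype (fun x => x ∈ T)
        (fun i => M i ((Equiv.Perm.subtypeCongr π₁ π₂) i))
      convert hm using 2 <;> exact congrArg₂ _ (univ_inst _ _) rfl
    rw [← hprod]
    have h1 : (∏ i : {x // x ∈ T}, M i.val ((Equiv.Perm.subtypeCongr π₁ π₂) i.val)) =
        ∏ i : {x // x ∈ T}, M i.val (π₁ i).val :=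
      Finset.prod_congr rfl fun i _ => by
        rw [Equiv.Perm.subtypeCongr.left_apply π₁ π₂ i.2]
    have h2 : (∏ i : {x // x ∉ T}, M i.val ((Equiv.Perm.subtypeCongr π₁ π₂) i.val)) =
        ∏ i : {x // x ∉ T}, M i.val (π₂ i).val :=
      Finset.prod_congr rfl fun i _ => by
        rw [Equiv.Perm.subtypeCongr.right_apply π₁ π₂ i.2]
    rw [h1, h2]
    ring
  have hEq : ∑ x, F x = ∑ y, G y := Fintype.sum_equiv (bigEquiv γ) F G hpt
  have hA : ∑ y, G y = aperm (a + b) M := by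
    rw [← Finset.univ_sigma_univ, Finset.sum_sigma, aperm]
    apply Finset.sum_congr rfl
    intro π _
    rw [hGdef]
    dsimp only
    rw [← Finset.sum_mul, key2]
  have hB : ∑ x, F x = ∑ T : Finset γ,
      aperm a (Matrix.of fun p q : {x // x ∈ T} => M p.val q.val) *
      aperm b (Matrix.of fun p q : {x // x ∉ T} => M p.val q.val) := by
    rw [← Finset.univ_sigma_univ, Finset.sum_sigma]
    apply Finset.sum_congr rfl
    intro T _
    rw [Fintype.sum_prod_type, aperm, aperm, Finset.sum_mul_sum]
    rfl
  rw [← hA, ← hEq, hB]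

end AP
end ChunkC

section ChunkD

namespace AP

variable {γ : Type*} [Fintype γ] [DecidableEq γ] {δ : Type*} [Fintype δ] [DecidableEq δ]

omit [Fintype γ] [DecidableEq γ] [Fintype δ] [DecidableEq δ] in
lemma permCongr_zpow (e : γ ≃ δ) (π : Equiv.Perm γ) (i : ℤ) :
    (e.permCongr π) ^ i = e.permCongr (π ^ i) := by
  let F : Equiv.Perm γ →* Equiv.Perm δ :=
    { toFun := fun σ => e.permCongr σ
      map_one' := by ext x; simp
      map_mul' := by
        intro σ τ
        ext x
        simp [Equiv.permCongr_apply, Equiv.Perm.mul_apply] }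
  exact (map_zpow F π i).symm

lemma numCycles_permCongr (e : γ ≃ δ) (π : Equiv.Perm γ) :
    numCycles (e.permCongr π) = numCycles π := by
  rw [numCycles_eq_card_Q, numCycles_eq_card_Q]
  refine (Fintype.card_congr (Quotient.congr e ?_)).symm
  intro a b
  constructor
  · rintro ⟨i, hi⟩
    refine ⟨i, ?_⟩
    rw [permCongr_zpow, Equiv.permCongr_apply, Equiv.symm_apply_apply, hi]
  · rintro ⟨i, hi⟩
    rw [permCongr_zpow, Equiv.permCongr_apply, Equiv.symm_apply_apply] at hi
    exact ⟨i, e.injective hi⟩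

/-- `aperm` is invariant under simultaneous relabeling of rows and columns. -/
lemma aperm_reindex (e : γ ≃ δ) (M : Matrix δ δ ℝ) (a : ℝ) :
    aperm a (Matrix.of fun p q : γ => M (e p) (e q)) = aperm a M := by
  rw [aperm, aperm]
  refine Fintype.sum_equiv (e.permCongr) _ _ ?_
  intro π
  rw [numCycles_permCongr]
  congr 1
  refine Fintype.prod_equiv e _ _ ?_
  intro i
  rw [Equiv.permCongr_apply, Equiv.symm_apply_apply]
  rfl

end AP
end ChunkD

section ChunkE


namespace AP

variable {n : ℕ}

/-- Finsets of a sigma type are families of finsets. -/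
def finsetSigmaEquiv (k : Fin n → ℕ) :
    (∀ i, Finset (Fin (k i))) ≃ Finset (Σ i, Fin (k i)) where
  toFun f := Finset.univ.filter (fun p => p.2 ∈ f p.1)
  invFun T := fun i => Finset.univ.filter (fun y => (⟨i, y⟩ : Σ i, Fin (k i)) ∈ T)
  left_inv f := by
    funext i
    ext y
    simp
  right_inv T := by
    ext ⟨i, y⟩
    simp

def sigmaSubtypeEquiv {k : Fin n → ℕ} (p : ∀ i, Fin (k i) → Prop) :
    {x : Σ i, Fin (k i) // p x.1 x.2} ≃ Σ i, {y : Fin (k i) // p i y} where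
  toFun x := ⟨x.val.1, ⟨x.val.2, x.2⟩⟩
  invFun s := ⟨⟨s.1, s.2.1⟩, s.2.2⟩
  left_inv x := rfl
  right_inv s := rfl

/-- Transport of the block matrix along a fiberwise equivalence. -/
lemma aperm_subtype_eq (a : ℝ) (C : Matrix (Fin n) (Fin n) ℝ) {k : Fin n → ℕ}
    (P : (Σ i, Fin (k i)) → Prop) [DecidablePred P]
    [Fintype {x : Σ i, Fin (k i) // P x}] [DecidableEq {x : Σ i, Fin (k i) // P x}]
    (m : Fin n → ℕ)
    (hm : ∀ i, Fintype.card {y : Fin (k i) // P ⟨i, y⟩} = m i) :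
    aperm a (Matrix.of fun s t : {x : Σ i, Fin (k i) // P x} =>
      C s.val.1 t.val.1) = apermK a C m := by
  let E : (Σ i, Fin (m i)) ≃ {x : Σ i, Fin (k i) // P x} :=
    ((Equiv.subtypeEquivRight (q := fun x : Σ i, Fin (k i) => P ⟨x.1, x.2⟩)
        (fun x => Iff.rfl)).trans
      ((sigmaSubtypeEquiv (fun i y => P ⟨i, y⟩)).trans
        (Equiv.sigmaCongrRight fun i => Fintype.equivFinOfCardEq (hm i)))).symm
  have h := aperm_reindex E (Matrix.of fun s t : {x : Σ i, Fin (k i) // P x} =>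
      C s.val.1 t.val.1) a
  rw [← h, apermK]
  rfl

lemma card_inst {β : Type*} (i1 i2 : Fintype β) :
    @Fintype.card β i1 = @Fintype.card β i2 := by
  cases Subsingleton.elim i1 i2; rfl

set_option maxHeartbeats 1000000 in
/-- Convolution identity for block `α`-permanents. -/
lemma apermK_add (a b : ℝ) (C : Matrix (Fin n) (Fin n) ℝ) (k : Fin n → ℕ) :
    apermK (a + b) C k = ∑ m ∈ Finset.Iic k,
      ((∏ i, (k i).choose (m i) : ℕ) : ℝ) * (apermK a C m * apermK b C (k - m)) := by
  classical
  rw [apermK, aperm_add]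
  rw [← Equiv.sum_comp (finsetSigmaEquiv k)
      (fun T => aperm a (Matrix.of fun p q : {x : Σ i, Fin (k i) // x ∈ T} =>
          (Matrix.of fun p q : Σ i, Fin (k i) => C p.1 q.1) p.val q.val) *
        aperm b (Matrix.of fun p q : {x : Σ i, Fin (k i) // x ∉ T} =>
          (Matrix.of fun p q : Σ i, Fin (k i) => C p.1 q.1) p.val q.val))]
  have hterm : ∀ f : ∀ i, Finset (Fin (k i)),
      aperm a (Matrix.of fun p q : {x : Σ i, Fin (k i) // x ∈ finsetSigmaEquiv k f} =>
          (Matrix.of fun p q : Σ i, Fin (k i) => C p.1 q.1) p.val q.val) *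
        aperm b (Matrix.of fun p q : {x : Σ i, Fin (k i) // x ∉ finsetSigmaEquiv k f} =>
          (Matrix.of fun p q : Σ i, Fin (k i) => C p.1 q.1) p.val q.val) =
      apermK a C (fun i => (f i).card) * apermK b C (fun i => k i - (f i).card) := by
    intro f
    have hmem : ∀ x : Σ i, Fin (k i), x ∈ finsetSigmaEquiv k f ↔ x.2 ∈ f x.1 := by
      intro x
      simp [finsetSigmaEquiv]
    obtain ⟨T, hT⟩ : ∃ T, finsetSigmaEquiv k f = T := ⟨_, rfl⟩
    rw [hT] at hmem ⊢
    congr 1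
    · have h1 := aperm_subtype_eq a C (fun x => x ∈ T)
        (fun i => (f i).card) ?card
      case card =>
        intro i
        rw [Fintype.card_congr (Equiv.subtypeEquivRight fun y => hmem ⟨i, y⟩)]
        exact (card_inst _ _).trans (Fintype.card_coe (f i))
      exact h1
    · have h1 := aperm_subtype_eq b C (fun x => x ∉ T)
        (fun i => k i - (f i).card) ?card
      case card =>
        intro i
        rw [Fintype.card_congr (Equiv.subtypeEquivRight fun y => not_congr (hmem ⟨i, y⟩))]
        rw [Fintype.card_subtype_compl, Fintype.card_fin]
        exact congrArg (fun z => k i - z)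
          ((card_inst _ _).trans (Fintype.card_coe (f i)))
      exact h1
  rw [Finset.sum_congr rfl (fun f _ => hterm f)]
  rw [← Finset.sum_fiberwise_of_maps_to (g := fun f : ∀ i, Finset (Fin (k i)) =>
      (fun i => (f i).card)) (t := Finset.Iic k) ?maps]
  case maps =>
    intro f _
    rw [Finset.mem_Iic]
    intro i
    exact (Finset.card_le_univ _).trans_eq (by simp)
  apply Finset.sum_congr rfl
  intro m hm
  have hcards : ∀ f ∈ Finset.univ.filter
      (fun f : ∀ i, Finset (Fin (k i)) => (fun i => (f i).card) = m),
      apermK a C (fun i => (f i).card) * apermK b C (fun i => k i - (f i).card) =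
      apermK a C m * apermK b C (k - m) := by
    intro f hf
    rw [Finset.mem_filter] at hf
    have h1 : (fun i => (f i).card) = m := hf.2
    have h2 : (fun i => k i - (f i).card) = k - m := by
      funext i
      rw [← h1]
      rfl
    rw [h1, h2]
  rw [Finset.sum_congr rfl hcards, Finset.sum_const, nsmul_eq_mul]
  congr 2
  rw [← Fintype.card_subtype]
  have e1 : {x : ∀ i, Finset (Fin (k i)) // (fun i => (x i).card) = m} ≃
      ∀ i, {s : Finset (Fin (k i)) // s.card = m i} :=
    (Equiv.subtypeEquivRight (fun f => funext_iff)).trans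
      (Equiv.subtypePiEquivPi (p := fun i (s : Finset (Fin (k i))) => s.card = m i))
  rw [Fintype.card_congr e1, Fintype.card_pi]
  apply Finset.prod_congr rfl
  intro i _
  exact (card_inst _ _).trans ((Fintype.card_finset_len (m i)).trans (by rw [Fintype.card_fin]))

end AP
end ChunkE

section Glue

open Matrix Filter


section DetPos
variable {n : ℕ}

lemma entry_nonneg_mul {B C : Matrix (Fin n) (Fin n) ℝ}
    (hB : ∀ i j, 0 ≤ B i j) (hC : ∀ i j, 0 ≤ C i j) : ∀ i j, 0 ≤ (B * C) i j := by
  intro i j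
  rw [Matrix.mul_apply]
  exact Finset.sum_nonneg fun l _ => mul_nonneg (hB i l) (hC l j)

lemma entry_nonneg_pow {B : Matrix (Fin n) (Fin n) ℝ} (hB : ∀ i j, 0 ≤ B i j) :
    ∀ m i j, 0 ≤ (B ^ m) i j := by
  intro m
  induction m with
  | zero => intro i j; rw [pow_zero, Matrix.one_apply]; split <;> norm_num
  | succ m ih => rw [pow_succ]; exact entry_nonneg_mul ih hB

lemma mulVec_mono {B : Matrix (Fin n) (Fin n) ℝ} (hB : ∀ i j, 0 ≤ B i j)
    {u v : Fin n → ℝ} (huv : ∀ j, u j ≤ v j) : ∀ i, B.mulVec u i ≤ B.mulVec v i := by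
  intro i
  simp only [Matrix.mulVec, dotProduct]
  exact Finset.sum_le_sum fun j _ => mul_le_mul_of_nonneg_left (huv j) (hB i j)

lemma det_one_sub_pos {B N : Matrix (Fin n) (Fin n) ℝ}
    (hB : ∀ i j, 0 ≤ B i j) (hN : ∀ i j, 0 ≤ N i j) (hNB : N * (1 - B) = 1) :
    0 < (1 - B).det := by
  have hN1 : N = 1 + N * B := by
    have : N * 1 - N * B = 1 := by rw [← Matrix.mul_sub]; exact hNB
    rw [Matrix.mul_one] at this
    rw [← this]; abel
  have hkey : ∀ M : ℕ, N = (∑ m ∈ Finset.range M, B ^ m) + N * B ^ M := by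
    intro M
    induction M with
    | zero => simp
    | succ M ih =>
      rw [Finset.sum_range_succ]
      calc N = (∑ m ∈ Finset.range M, B ^ m) + N * B ^ M := ih
        _ = (∑ m ∈ Finset.range M, B ^ m) + ((1 + N * B) * B ^ M) := by rw [← hN1]
        _ = (∑ m ∈ Finset.range M, B ^ m) + B ^ M + N * B ^ (M+1) := by
            rw [add_mul, Matrix.one_mul, pow_succ']
            rw [← Matrix.mul_assoc]
            abel
  have hbound : ∀ (M : ℕ) (i j : Fin n), (∑ m ∈ Finset.range M, (B ^ m) i j) ≤ N i j := by
    intro M i j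
    have h1 := congrFun (congrFun (hkey M) i) j
    have h2 : (((∑ m ∈ Finset.range M, B ^ m) + N * B ^ M) : Matrix (Fin n) (Fin n) ℝ) i j
        = (∑ m ∈ Finset.range M, (B ^ m) i j) + (N * B ^ M) i j := by
      simp [Matrix.add_apply, Matrix.sum_apply]
    have h3 : 0 ≤ (N * B ^ M) i j := entry_nonneg_mul hN (entry_nonneg_pow hB M) i j
    rw [h1, h2]
    linarith
  have htend : ∀ i j : Fin n, Tendsto (fun m => (B ^ m) i j) atTop (nhds 0) := by
    intro i j
    exact (summable_of_sum_range_le (fun m => entry_nonneg_pow hB m i j)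
      (fun M => hbound M i j)).tendsto_atTop_zero
  have hinj : ∀ s : ℝ, s ∈ Set.Icc (0:ℝ) 1 → ∀ x : Fin n → ℝ,
      (1 - s • B).mulVec x = 0 → x = 0 := by
    intro s hs x hx
    have hxe : x = s • (B.mulVec x) := by
      have : (1 - s • B).mulVec x = x - s • B.mulVec x := by
        rw [Matrix.sub_mulVec, Matrix.one_mulVec, Matrix.smul_mulVec]
      rw [this] at hx
      rwa [sub_eq_zero] at hx
    set y : Fin n → ℝ := fun i => |x i| with hy
    have hyB : ∀ i, y i ≤ B.mulVec y i := by
      intro i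
      have h1 : x i = s * B.mulVec x i := by
        conv_lhs => rw [hxe]
        simp
      have h2 : |x i| = s * |B.mulVec x i| := by
        rw [h1, abs_mul, abs_of_nonneg hs.1]
      have h3 : |B.mulVec x i| ≤ B.mulVec y i := by
        simp only [Matrix.mulVec, dotProduct]
        refine (Finset.abs_sum_le_sum_abs _ _).trans ?_
        refine Finset.sum_le_sum fun j _ => ?_
        rw [abs_mul, abs_of_nonneg (hB i j)]
      have h4 : 0 ≤ B.mulVec y i := by
        simp only [Matrix.mulVec, dotProduct]
        exact Finset.sum_nonneg fun j _ => mul_nonneg (hB i j) (abs_nonneg _)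
      calc y i = s * |B.mulVec x i| := h2
        _ ≤ 1 * (B.mulVec y i) := by
            apply mul_le_mul hs.2 h3 (abs_nonneg _) (by norm_num)
        _ = B.mulVec y i := one_mul _
    have hmono : ∀ m i, y i ≤ (B ^ m).mulVec y i := by
      intro m
      induction m with
      | zero => intro i; simp [Matrix.one_mulVec]
      | succ m ih =>
        intro i
        have h1 : (B ^ (m+1)).mulVec y = (B ^ m).mulVec (B.mulVec y) := by
          rw [pow_succ, ← Matrix.mulVec_mulVec]
        rw [h1]
        exact (ih i).trans (mulVec_mono (entry_nonneg_pow hB m) hyB i)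
    have hzero : ∀ i, y i ≤ 0 := by
      intro i
      have hlim : Tendsto (fun m => (B ^ m).mulVec y i) atTop (nhds 0) := by
        have : (fun m => (B ^ m).mulVec y i) = fun m => ∑ j, (B ^ m) i j * y j := by
          funext m; simp [Matrix.mulVec, dotProduct]
        rw [this]
        have := tendsto_finset_sum (Finset.univ : Finset (Fin n))
          (fun j _ => (htend i j).mul_const (y j))
        simpa using this
      exact ge_of_tendsto' hlim (fun m => hmono m i)
    funext i
    have := hzero i
    have h2 : 0 ≤ y i := abs_nonneg _
    have : y i = 0 := le_antisymm this h2
    exact abs_eq_zero.mp this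
  have hdet : ∀ s : ℝ, s ∈ Set.Icc (0:ℝ) 1 → (1 - s • B).det ≠ 0 := by
    intro s hs h0
    obtain ⟨v, hv, hv0⟩ := (Matrix.exists_mulVec_eq_zero_iff).mpr h0
    exact hv (hinj s hs v hv0)
  have hcont : Continuous fun s : ℝ => (1 - s • B).det := by
    apply Continuous.matrix_det
    exact continuous_const.sub (continuous_id.smul continuous_const)
  have hf0 : (1 - (0:ℝ) • B).det = 1 := by simp
  by_contra hle
  push_neg at hle
  have h1 : (1 - (1:ℝ) • B).det ≠ 0 := hdet 1 (by norm_num)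
  have h1' : (1 - (1:ℝ) • B).det < 0 := by
    rw [one_smul] at h1 ⊢
    exact lt_of_le_of_ne hle h1
  have hiv := intermediate_value_Icc' (by norm_num : (0:ℝ) ≤ 1) hcont.continuousOn
  have h0mem : (0:ℝ) ∈ Set.Icc ((1 - (1:ℝ) • B).det) ((1 - (0:ℝ) • B).det) := by
    constructor
    · exact le_of_lt h1'
    · rw [hf0]; norm_num
  obtain ⟨s, hs, hfs⟩ := hiv h0mem
  exact hdet s hs hfs

end DetPos




section App
variable {n : ℕ} {A : Matrix (Fin n) (Fin n) ℝ}

lemma diag_pos (hA : IsNonsingMMatrix A) : ∀ i, 0 < A i i := by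
  obtain ⟨hoff, hdet, hinv⟩ := hA
  intro i
  have h1 : (A * A⁻¹) i i = 1 := by rw [Matrix.mul_nonsing_inv A hdet]; simp
  rw [Matrix.mul_apply] at h1
  have h2 : ∑ j ∈ Finset.univ \ {i}, A i j * A⁻¹ j i ≤ 0 :=
    Finset.sum_nonpos fun j hj => by
      have hne : j ≠ i := by simpa using (Finset.mem_sdiff.mp hj).2
      exact mul_nonpos_of_nonpos_of_nonneg (hoff i j (Ne.symm hne)) (hinv j i)
  have h3 : A i i * A⁻¹ i i + ∑ j ∈ Finset.univ \ {i}, A i j * A⁻¹ j i = 1 := by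
    rw [← h1, Finset.sum_eq_add_sum_sdiff_singleton_of_mem (Finset.mem_univ i)]
  have h4 := hinv i i
  nlinarith

lemma Abar_eq_one_sub (hA : IsNonsingMMatrix A) : Abar A = 1 - Bbar A := by
  ext i j
  simp only [Abar, Bbar, Matrix.of_apply, Matrix.sub_apply, Matrix.one_apply]
  by_cases h : i = j
  · subst h
    simp [div_self (ne_of_gt (diag_pos hA i))]
  · simp [h, Ne.symm h]
    ring

lemma Bbar_nonneg (hA : IsNonsingMMatrix A) : ∀ i j, 0 ≤ Bbar A i j := by
  intro i j
  simp only [Bbar, Matrix.of_apply]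
  split
  · exact le_rfl
  · next h =>
      apply div_nonneg _ (le_of_lt (diag_pos hA i))
      simpa using hA.1 i j h

lemma det_Abar_pos (hA : IsNonsingMMatrix A) : 0 < (Abar A).det := by
  have hd := diag_pos hA
  set N : Matrix (Fin n) (Fin n) ℝ := A⁻¹ * Matrix.diagonal (fun i => A i i) with hNdef
  have hAbar : Abar A = Matrix.diagonal (fun i => (A i i)⁻¹) * A := by
    ext i j
    simp [Abar, Matrix.diagonal_mul, div_eq_inv_mul]
  have hNA : N * Abar A = 1 := by
    rw [hAbar, hNdef, Matrix.mul_assoc, ← Matrix.mul_assoc (Matrix.diagonal _),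
      Matrix.diagonal_mul_diagonal]
    have : (fun i => A i i * (A i i)⁻¹) = fun _ => (1:ℝ) := by
      funext i; exact mul_inv_cancel₀ (ne_of_gt (hd i))
    rw [this, Matrix.diagonal_one, Matrix.one_mul, Matrix.nonsing_inv_mul A hA.2.1]
  have hNn : ∀ i j, 0 ≤ N i j := by
    intro i j
    rw [hNdef, Matrix.mul_diagonal]
    exact mul_nonneg (hA.2.2 i j) (le_of_lt (hd j))
  rw [Abar_eq_one_sub hA]
  apply det_one_sub_pos (Bbar_nonneg hA) hNn
  rw [← Abar_eq_one_sub hA]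
  exact hNA

end App

end Glue

/-- Infinite divisibility of `Z`: for `α, β > 0`, if `Z_{α,B̄}` and
`Z_{β,B̄}` are independent then `Z_{α,B̄} + Z_{β,B̄}` has the law of `Z_{α+β,B̄}`;
equivalently, for every `k ∈ ℕ^n`,
`P(Z_{α+β,B̄} = k) = Σ_{k' + k'' = k} P(Z_{α,B̄} = k') P(Z_{β,B̄} = k'')`. -/
theorem statement3 {n : ℕ} (A : Matrix (Fin n) (Fin n) ℝ) (hA : IsNonsingMMatrix A)
    (α β : ℝ) (hα : 0 < α) (hβ : 0 < β) (k : Fin n → ℕ) :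
    Zpmf (α + β) A k = ∑ k' ∈ Finset.Iic k, Zpmf α A k' * Zpmf β A (k - k') := by
  have hd : 0 < (Abar A).det := det_Abar_pos hA
  rw [Zpmf, AP.apermK_add, Finset.mul_sum, Finset.sum_div]
  apply Finset.sum_congr rfl
  intro m hm
  rw [Zpmf, Zpmf]
  have hmk : ∀ i, m i ≤ k i := fun i => (Finset.mem_Iic.mp hm) i
  have hFm : (0:ℝ) < ∏ i, ((m i).factorial : ℝ) :=
    Finset.prod_pos fun i _ => by exact_mod_cast (m i).factorial_pos
  have hFkm : (0:ℝ) < ∏ i, (((k - m) i).factorial : ℝ) :=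
    Finset.prod_pos fun i _ => by exact_mod_cast ((k - m) i).factorial_pos
  have hFk : (0:ℝ) < ∏ i, ((k i).factorial : ℝ) :=
    Finset.prod_pos fun i _ => by exact_mod_cast (k i).factorial_pos
  have hkey : ((∏ i, (k i).choose (m i) : ℕ) : ℝ) *
      ((∏ i, (((k - m) i).factorial : ℝ)) * (∏ i, ((m i).factorial : ℝ))) =
      ∏ i, ((k i).factorial : ℝ) := by
    rw [← Nat.cast_prod, ← Nat.cast_prod, ← Nat.cast_prod, ← Nat.cast_mul, ← Nat.cast_mul]
    congr 1
    rw [← Finset.prod_mul_distrib, ← Finset.prod_mul_distrib]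
    apply Finset.prod_congr rfl
    intro i _
    have h := Nat.choose_mul_factorial_mul_factorial (hmk i)
    have hsub : (k - m) i = k i - m i := rfl
    rw [hsub]
    calc (k i).choose (m i) * ((k i - m i).factorial * (m i).factorial)
        = (k i).choose (m i) * (m i).factorial * (k i - m i).factorial := by ring
      _ = (k i).factorial := h
  rw [Real.rpow_add hd]
  have hc : ((∏ i, (k i).choose (m i) : ℕ) : ℝ) =
      (∏ i, ((k i).factorial : ℝ)) /
        ((∏ i, (((k - m) i).factorial : ℝ)) * (∏ i, ((m i).factorial : ℝ))) := by
    rw [eq_div_iff (by positivity)]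
    exact hkey
  rw [hc]
  field_simp
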